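/- Quantitative lower bound on the common refinement of two branching interval systems: let γ̄ > 0, M > 0, g₁, g₂ ∈ [0, γ̄], and let q = (q_k)_{k∈ℕ} and q̃ = (q̃_k)_{k∈ℕ} be sequences of nonnegative reals with Σ_{k=0}^∞ q_k = 1, Σ_{k=0}^∞ q̃_k = 1 and Σ_{k=0}^∞ k·q_k ≤ M. Define I := ([g₁, γ̄] ∩ [g₂, γ̄]) ∪ ⋃_{k∈ℕ} (I_k(g₁, q) ∩ I_k(g₂, q̃)). Then for every integer K ≥ 1, the Lebesgue measure of I satisfies |I| ≥ γ̄ − γ̄·M/K − (2K + 1)·|g₁ − g₂| − 2γ̄·Σ_{k=0}^{K−1} (K − k)·|q_k − q̃_k|. -/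

import Mathlib

open scoped BigOperators

noncomputable section

/-- The branching interval
`I_k(g₁, q) = [ g₁·Σ_{l<k} q_l , g₁·Σ_{l<k+1} q_l )`. -/
def brInt (g₁ : ℝ) (q : ℕ → ℝ) (k : ℕ) : Set ℝ :=
  Set.Ico (g₁ * ∑ l ∈ Finset.range k, q l) (g₁ * ∑ l ∈ Finset.range (k + 1), q l)

/-- Double-sum exchange: `∑_{k<K} ∑_{l≤k} δ l = ∑_{k<K} (K−k) δ k`. -/
lemma brInt_double_sum (δ : ℕ → ℝ) :
    ∀ K : ℕ, ∑ k ∈ Finset.range K, ∑ l ∈ Finset.range (k + 1), δ l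
      = ∑ k ∈ Finset.range K, ((K : ℝ) - k) * δ k := by
  intro K
  induction K with
  | zero => simp
  | succ K ih =>
    rw [Finset.sum_range_succ, ih,
      Finset.sum_range_succ (f := fun k => (((K + 1 : ℕ) : ℝ) - k) * δ k)]
    have h2 : ∑ k ∈ Finset.range K, (((K + 1 : ℕ) : ℝ) - k) * δ k
        = ∑ k ∈ Finset.range K, (((K : ℝ) - k) * δ k + δ k) := by
      apply Finset.sum_congr rfl
      intro k _
      push_cast
      ring
    rw [h2, Finset.sum_add_distrib, Finset.sum_range_succ (f := δ)]
    push_cast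
    ring

theorem branching_intervals_refinement_lower_bound
    (γbar M : ℝ) (hγbar : 0 < γbar) (hM : 0 < M)
    (g₁ : ℝ) (hg₁ : g₁ ∈ Set.Icc (0 : ℝ) γbar)
    (g₂ : ℝ) (hg₂ : g₂ ∈ Set.Icc (0 : ℝ) γbar)
    (q : ℕ → ℝ) (hq : ∀ k, 0 ≤ q k) (hqsum : HasSum q 1)
    (qt : ℕ → ℝ) (hqt : ∀ k, 0 ≤ qt k) (hqtsum : HasSum qt 1)
    (hmean : ∃ S, S ≤ M ∧ HasSum (fun k : ℕ => (k : ℝ) * q k) S)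
    (K : ℕ) (hK : 1 ≤ K) :
    γbar - γbar * M / K - (2 * K + 1) * |g₁ - g₂|
        - 2 * γbar * ∑ k ∈ Finset.range K, ((K : ℝ) - k) * |q k - qt k|
      ≤ (MeasureTheory.volume
          ((Set.Icc g₁ γbar ∩ Set.Icc g₂ γbar) ∪
            ⋃ k : ℕ, (brInt g₁ q k ∩ brInt g₂ qt k))).toReal := by
  obtain ⟨hg₁0, hg₁γ⟩ := hg₁
  obtain ⟨hg₂0, hg₂γ⟩ := hg₂
  have hK0 : (0 : ℝ) < (K : ℝ) := by exact_mod_cast hK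
  set Q : ℕ → ℝ := fun n => ∑ l ∈ Finset.range n, q l with hQdef
  set Qt : ℕ → ℝ := fun n => ∑ l ∈ Finset.range n, qt l with hQtdef
  set δ : ℕ → ℝ := fun k => |q k - qt k| with hδdef
  set D : ℕ → ℝ := fun n => ∑ l ∈ Finset.range n, δ l with hDdef
  set P : ℕ → Set ℝ := fun k => brInt g₁ q k ∩ brInt g₂ qt k with hPdef
  set A : Set ℝ := Set.Icc g₁ γbar ∩ Set.Icc g₂ γbar with hAdef
  have hQ0 : ∀ n, 0 ≤ Q n := fun n => Finset.sum_nonneg fun i _ => hq i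
  have hQt0 : ∀ n, 0 ≤ Qt n := fun n => Finset.sum_nonneg fun i _ => hqt i
  have hQ1 : ∀ n, Q n ≤ 1 := fun n => sum_le_hasSum _ (fun i _ => hq i) hqsum
  have hQt1 : ∀ n, Qt n ≤ 1 := fun n => sum_le_hasSum _ (fun i _ => hqt i) hqtsum
  have hD0 : ∀ n, 0 ≤ D n := fun n => Finset.sum_nonneg fun i _ => abs_nonneg _
  have hQmono : Monotone Q := by
    intro a b hab
    exact Finset.sum_le_sum_of_subset_of_nonneg (Finset.range_subset_range.mpr hab)
      (fun i _ _ => hq i)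
  have hQQt : ∀ n, |Q n - Qt n| ≤ D n := by
    intro n
    have h : Q n - Qt n = ∑ l ∈ Finset.range n, (q l - qt l) := by
      simp [hQdef, hQtdef, Finset.sum_sub_distrib]
    rw [h]
    exact Finset.abs_sum_le_sum_abs _ _
  have hend : ∀ n, |g₁ * Q n - g₂ * Qt n| ≤ |g₁ - g₂| + γbar * D n := by
    intro n
    have h1 : g₁ * Q n - g₂ * Qt n = (g₁ - g₂) * Q n + g₂ * (Q n - Qt n) := by ring
    rw [h1]
    calc |(g₁ - g₂) * Q n + g₂ * (Q n - Qt n)|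
        ≤ |(g₁ - g₂) * Q n| + |g₂ * (Q n - Qt n)| := abs_add_le _ _
      _ = |g₁ - g₂| * |Q n| + |g₂| * |Q n - Qt n| := by simp only [abs_mul]
      _ ≤ |g₁ - g₂| * 1 + γbar * D n := by
          have hb1 : |g₁ - g₂| * |Q n| ≤ |g₁ - g₂| * 1 :=
            mul_le_mul_of_nonneg_left
              (by rw [abs_of_nonneg (hQ0 n)]; exact hQ1 n) (abs_nonneg _)
          have hb2 : |g₂| * |Q n - Qt n| ≤ γbar * D n :=
            mul_le_mul (by rw [abs_of_nonneg hg₂0]; exact hg₂γ) (hQQt n)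
              (abs_nonneg _) (le_of_lt hγbar)
          linarith
      _ = |g₁ - g₂| + γbar * D n := by ring
  have hPIco : ∀ k, P k
      = Set.Ico (g₁ * Q k ⊔ g₂ * Qt k) (g₁ * Q (k+1) ⊓ g₂ * Qt (k+1)) := by
    intro k
    simp only [hPdef, brInt, Set.Ico_inter_Ico]
    rfl
  have hPmeas : ∀ k, MeasurableSet (P k) := by
    intro k; rw [hPIco k]; exact measurableSet_Ico
  have hsucc : ∀ k, g₁ * Q (k+1) - g₁ * Q k = g₁ * q k := by
    intro k
    have : Q (k+1) = Q k + q k := Finset.sum_range_succ q k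
    rw [this]; ring
  -- volume lower bound for P k
  have hPvol : ∀ k, g₁ * q k - 2 * |g₁ - g₂| - γbar * (D k + D (k+1))
      ≤ (MeasureTheory.volume (P k)).toReal := by
    intro k
    rw [hPIco k, Real.volume_Ico, ENNReal.toReal_ofReal']
    apply le_max_of_le_left
    have h1 : g₁ * Q k ⊔ g₂ * Qt k ≤ g₁ * Q k + |g₁ * Q k - g₂ * Qt k| := by
      apply sup_le
      · linarith [abs_nonneg (g₁ * Q k - g₂ * Qt k)]
      · have := neg_abs_le (g₁ * Q k - g₂ * Qt k); linarith
    have h2 : g₁ * Q (k+1) - |g₁ * Q (k+1) - g₂ * Qt (k+1)|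
        ≤ g₁ * Q (k+1) ⊓ g₂ * Qt (k+1) := by
      apply le_inf
      · linarith [abs_nonneg (g₁ * Q (k+1) - g₂ * Qt (k+1))]
      · have := le_abs_self (g₁ * Q (k+1) - g₂ * Qt (k+1)); linarith
    have h3 := hend k
    have h4 := hend (k+1)
    have h5 := hsucc k
    linarith
  -- pieces are below g₁
  have hPsub : ∀ k, P k ⊆ Set.Ico 0 g₁ := by
    intro k x hx
    obtain ⟨⟨hx1, hx2⟩, _⟩ := hx
    constructor
    · exact le_trans (mul_nonneg hg₁0 (hQ0 k)) hx1
    · calc x < g₁ * Q (k+1) := hx2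
        _ ≤ g₁ * 1 := mul_le_mul_of_nonneg_left (hQ1 _) hg₁0
        _ = g₁ := mul_one g₁
  have hSsub : A ∪ ⋃ k : ℕ, P k ⊆ Set.Icc 0 γbar := by
    intro x hx
    rcases hx with hx | hx
    · exact ⟨le_trans hg₁0 hx.1.1, hx.1.2⟩
    · obtain ⟨_, ⟨k, rfl⟩, hxk⟩ := hx
      have := hPsub k hxk
      exact ⟨this.1, le_of_lt (lt_of_lt_of_le this.2 hg₁γ)⟩
  have hIccfin : MeasureTheory.volume (Set.Icc (0:ℝ) γbar) ≠ ⊤ := by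
    rw [Real.volume_Icc]; exact ENNReal.ofReal_ne_top
  have hSfin : MeasureTheory.volume (A ∪ ⋃ k : ℕ, P k) ≠ ⊤ :=
    ne_top_of_le_ne_top hIccfin (MeasureTheory.measure_mono hSsub)
  have hAfin : MeasureTheory.volume A ≠ ⊤ :=
    ne_top_of_le_ne_top hSfin (MeasureTheory.measure_mono Set.subset_union_left)
  have hPfin : ∀ k, MeasureTheory.volume (P k) ≠ ⊤ := by
    intro k
    apply ne_top_of_le_ne_top hSfin
    apply MeasureTheory.measure_mono
    exact Set.subset_union_of_subset_right (Set.subset_iUnion P k) _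
  -- disjointness of the pieces
  have hbr_disj : ∀ i j : ℕ, i < j → Disjoint (brInt g₁ q i) (brInt g₁ q j) := by
    intro i j hij
    rw [brInt, brInt, Set.Ico_disjoint_Ico]
    have : g₁ * Q (i+1) ≤ g₁ * Q j :=
      mul_le_mul_of_nonneg_left (hQmono hij) hg₁0
    exact le_trans (inf_le_left) (le_trans this le_sup_right)
  have hPdisj : (↑(Finset.range K) : Set ℕ).PairwiseDisjoint P := by
    intro i _ j _ hij
    have h : Disjoint (brInt g₁ q i) (brInt g₁ q j) := by
      rcases lt_or_gt_of_ne hij with h | h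
      · exact hbr_disj i j h
      · exact (hbr_disj j i h).symm
    exact Set.disjoint_of_subset Set.inter_subset_left Set.inter_subset_left h
  have hAPdisj : Disjoint A (⋃ k ∈ Finset.range K, P k) := by
    rw [Set.disjoint_left]
    intro x hxA hxU
    simp only [Set.mem_iUnion] at hxU
    obtain ⟨k, _, hxk⟩ := hxU
    have h1 : g₁ ≤ x := hxA.1.1
    have h2 : x < g₁ := (hPsub k hxk).2
    linarith
  -- measure of the finite disjoint union
  have hvol_eq : MeasureTheory.volume (A ∪ ⋃ k ∈ Finset.range K, P k)
      = MeasureTheory.volume A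
        + ∑ k ∈ Finset.range K, MeasureTheory.volume (P k) := by
    rw [MeasureTheory.measure_union hAPdisj
      (MeasurableSet.biUnion (Finset.range K).countable_toSet fun k _ => hPmeas k),
      MeasureTheory.measure_biUnion_finset hPdisj fun k _ => hPmeas k]
  have hUsub : A ∪ ⋃ k ∈ Finset.range K, P k ⊆ A ∪ ⋃ k : ℕ, P k := by
    apply Set.union_subset_union_right
    exact Set.iUnion₂_subset fun k _ => Set.subset_iUnion P k
  have hmain : (MeasureTheory.volume A).toReal
      + ∑ k ∈ Finset.range K, (MeasureTheory.volume (P k)).toReal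
      ≤ (MeasureTheory.volume (A ∪ ⋃ k : ℕ, P k)).toReal := by
    rw [← ENNReal.toReal_sum (fun k _ => hPfin k), ← ENNReal.toReal_add hAfin
      (by exact ENNReal.sum_ne_top.mpr fun k _ => hPfin k), ← hvol_eq]
    exact ENNReal.toReal_mono hSfin (MeasureTheory.measure_mono hUsub)
  -- volume of A
  have hAvol : γbar - g₁ - |g₁ - g₂| ≤ (MeasureTheory.volume A).toReal := by
    rw [hAdef, Set.Icc_inter_Icc, inf_idem, Real.volume_Icc, ENNReal.toReal_ofReal']
    apply le_max_of_le_left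
    have : g₁ ⊔ g₂ ≤ g₁ + |g₁ - g₂| := by
      apply sup_le
      · linarith [abs_nonneg (g₁ - g₂)]
      · have := neg_abs_le (g₁ - g₂); linarith
    linarith
  -- sum of D's bound
  have hDsum : ∑ k ∈ Finset.range K, (D k + D (k+1))
      ≤ 2 * ∑ k ∈ Finset.range K, ((K : ℝ) - k) * δ k := by
    have h1 : ∀ k, D k ≤ D (k+1) := by
      intro k
      have : D (k+1) = D k + δ k := Finset.sum_range_succ δ k
      rw [this]; linarith [abs_nonneg (q k - qt k)]
    calc ∑ k ∈ Finset.range K, (D k + D (k+1))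
        ≤ ∑ k ∈ Finset.range K, (2 * D (k+1)) := by
          apply Finset.sum_le_sum; intro k _; linarith [h1 k]
      _ = 2 * ∑ k ∈ Finset.range K, D (k+1) := by rw [Finset.mul_sum]
      _ = 2 * ∑ k ∈ Finset.range K, ((K : ℝ) - k) * δ k := by
          rw [brInt_double_sum δ K]
  -- sum of piece volumes
  have hsumP : g₁ * Q K - 2 * K * |g₁ - g₂|
      - 2 * γbar * ∑ k ∈ Finset.range K, ((K : ℝ) - k) * δ k
      ≤ ∑ k ∈ Finset.range K, (MeasureTheory.volume (P k)).toReal := by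
    have h1 : ∑ k ∈ Finset.range K, (g₁ * q k - 2 * |g₁ - g₂| - γbar * (D k + D (k+1)))
        ≤ ∑ k ∈ Finset.range K, (MeasureTheory.volume (P k)).toReal :=
      Finset.sum_le_sum fun k _ => hPvol k
    have h2 : ∑ k ∈ Finset.range K, (g₁ * q k - 2 * |g₁ - g₂| - γbar * (D k + D (k+1)))
        = g₁ * Q K - 2 * K * |g₁ - g₂|
          - γbar * ∑ k ∈ Finset.range K, (D k + D (k+1)) := by
      simp only [Finset.sum_sub_distrib, ← Finset.mul_sum, Finset.sum_const,
        Finset.card_range, nsmul_eq_mul]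
      ring
    have h3 : γbar * ∑ k ∈ Finset.range K, (D k + D (k+1))
        ≤ γbar * (2 * ∑ k ∈ Finset.range K, ((K : ℝ) - k) * δ k) :=
      mul_le_mul_of_nonneg_left hDsum (le_of_lt hγbar)
    linarith
  -- tail bound
  have htail : g₁ - g₁ * Q K ≤ γbar * M / K := by
    obtain ⟨S0, hSM, hS⟩ := hmean
    have hqsummable := hqsum.summable
    have h1 : Q K + ∑' i : ℕ, q (i + K) = 1 := by
      rw [Summable.sum_add_tsum_nat_add K hqsummable, hqsum.tsum_eq]
    set T := ∑' i : ℕ, q (i + K) with hTdef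
    have hT0 : 0 ≤ T := tsum_nonneg fun i => hq _
    have hfs : Summable (fun n : ℕ => (n : ℝ) * q n) := hS.summable
    have hfs' : Summable (fun i : ℕ => ((i + K : ℕ) : ℝ) * q (i + K)) :=
      (summable_nat_add_iff K).mpr hfs
    have hshift : Summable (fun i : ℕ => q (i + K)) :=
      (summable_nat_add_iff K).mpr hqsummable
    have hKT : (K : ℝ) * T ≤ M := by
      have e1 : (K : ℝ) * T = ∑' i : ℕ, (K : ℝ) * q (i + K) := (tsum_mul_left).symm
      have e2 : ∑' i : ℕ, (K : ℝ) * q (i + K)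
          ≤ ∑' i : ℕ, ((i + K : ℕ) : ℝ) * q (i + K) := by
        apply Summable.tsum_le_tsum _ (hshift.mul_left _) hfs'
        intro i
        apply mul_le_mul_of_nonneg_right _ (hq _)
        exact_mod_cast Nat.le_add_left K i
      have e3 : ∑ i ∈ Finset.range K, (i : ℝ) * q i
          + ∑' i : ℕ, ((i + K : ℕ) : ℝ) * q (i + K) = S0 := by
        have := Summable.sum_add_tsum_nat_add (f := fun n : ℕ => (n : ℝ) * q n) K hfs
        rw [hS.tsum_eq] at this
        exact_mod_cast this
      have e4 : 0 ≤ ∑ i ∈ Finset.range K, (i : ℝ) * q i :=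
        Finset.sum_nonneg fun i _ => mul_nonneg (Nat.cast_nonneg i) (hq i)
      linarith
    have hTM : T ≤ M / K := by
      rw [le_div_iff₀ hK0]; linarith [hKT]
    have hgT : g₁ - g₁ * Q K = g₁ * T := by
      have : Q K = 1 - T := by linarith
      rw [this]; ring
    rw [hgT]
    calc g₁ * T ≤ γbar * T := mul_le_mul_of_nonneg_right hg₁γ hT0
      _ ≤ γbar * (M / K) := mul_le_mul_of_nonneg_left hTM (le_of_lt hγbar)
      _ = γbar * M / K := by ring
  -- assemble
  have habs : 0 ≤ |g₁ - g₂| := abs_nonneg _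
  linarith [hmain, hAvol, hsumP, htail]

end
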